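/- Let X be a finite alphabet and F a finite nonempty set of words over X, each of length at least 2, with l + 1 the maximal length of a word of F. Let p_n denote the number of paths of length n in the Ufnarovski graph. Then limsup_{m→∞} |L_m|^{1/m} = limsup_{n→∞} (p_n)^{1/n}; i.e. the algebraic entropy of the monomial algebra A = k⟨X⟩/I(F) equals the algebraic entropy of the path algebra of its Ufnarovski graph. -/

import Mathlib

open Filter Real Topology

/-- A word is *legal* (with respect to the set of forbidden words `F`) if no element of `F`
is a contiguous factor of it. -/

def ListLegal {X : Type*} (F : Set (List X)) (w : List X) : Prop :=
  ∀ f ∈ F, ∀ u v : List X, w ≠ u ++ f ++ v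

lemma listLegal_iff {X : Type*} (F : Set (List X)) (w : List X) :
    ListLegal F w ↔ ∀ f ∈ F, ¬ f <:+: w := by
  constructor
  · rintro h f hf ⟨s, t, rfl⟩
    exact h f hf s t rfl
  · intro h f hf u v hw
    exact h f hf ⟨u, v, hw.symm⟩

lemma ListLegal.infix {X : Type*} {F : Set (List X)} {w w' : List X}
    (h : ListLegal F w) (hw : w' <:+: w) : ListLegal F w' := by
  rw [listLegal_iff] at h ⊢
  exact fun f hf hfw => h f hf (hfw.trans hw)

lemma infix_take_middle {X : Type*} (u f v : List X) (m : ℕ)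
    (h : u.length + f.length ≤ m) : f <:+: (u ++ f ++ v).take m := by
  have key : (u ++ f ++ v).take m = u ++ (f ++ v.take (m - u.length - f.length)) := by
    rw [List.append_assoc, List.take_append,
      List.take_of_length_le (by omega : u.length ≤ m), List.take_append,
      List.take_of_length_le (by omega : f.length ≤ m - u.length)]
  exact ⟨u, v.take (m - u.length - f.length), by rw [key, List.append_assoc]⟩

lemma legal_of_windows {X : Type*} {F : Set (List X)} {w : List X} {n l : ℕ}
    (hn : 1 ≤ n) (hw : w.length = n + l)
    (hFle : ∀ f ∈ F, f.length ≤ l + 1)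
    (h : ∀ i < n, ListLegal F ((w.drop i).take (l+1))) : ListLegal F w := by
  rw [listLegal_iff]
  rintro f hf ⟨u, v, hw'⟩
  subst hw'
  have hlen : u.length + (f.length + v.length) = n + l := by
    simpa using hw
  set i := min u.length (n-1) with hi
  have hin : i < n := by omega
  refine (listLegal_iff _ _).1 (h i hin) f hf ?_
  have hiu : i ≤ u.length := by omega
  have hfl : f.length ≤ l + 1 := hFle f hf
  have h1 : (u ++ f ++ v).drop i = u.drop i ++ f ++ v := by
    rw [List.append_assoc, List.drop_append_of_le_length hiu, List.append_assoc]
  rw [h1]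
  exact infix_take_middle _ _ _ _ (by rw [List.length_drop]; omega)

lemma eq_of_windows {X : Type*} {w w' : List X} {n l : ℕ} (hn : 1 ≤ n)
    (hw : w.length = n + l) (hw' : w'.length = n + l)
    (h : ∀ i < n, (w.drop i).take (l+1) = (w'.drop i).take (l+1)) : w = w' := by
  apply List.ext_getElem?
  intro j
  by_cases hj : j < n + l
  · set i := min j (n-1) with hi
    have hin : i < n := by omega
    have key : ∀ v : List X, v.length = n + l →
        ((v.drop i).take (l+1))[j - i]? = v[j]? := by
      intro v hv
      rw [List.getElem?_take, if_pos (by omega), List.getElem?_drop]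
      congr 1
      omega
    rw [← key w hw, ← key w' hw', h i hin]
  · rw [List.getElem?_eq_none (by omega), List.getElem?_eq_none (by omega)]

lemma exists_word {X : Type*} {l : ℕ} (seq : ℕ → List X) :
    ∀ n, 1 ≤ n → (∀ i < n, (seq i).length = l + 1) →
    (∀ i, i + 1 < n → (seq i).drop 1 = (seq (i+1)).take l) →
    ∃ w : List X, w.length = n + l ∧ ∀ i < n, (w.drop i).take (l+1) = seq i := by
  intro n
  induction n with
  | zero => omega
  | succ n ih =>
    intro _ hlen hchain
    by_cases hn0 : n = 0
    · subst hn0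
      refine ⟨seq 0, by rw [hlen 0 (by omega)]; ring, ?_⟩
      intro i hi
      interval_cases i
      simp only [List.drop_zero]
      exact List.take_of_length_le (le_of_eq (hlen 0 (by omega)))
    · have hn1 : 1 ≤ n := by omega
      obtain ⟨w, hwlen, hwin⟩ := ih hn1 (fun i hi => hlen i (by omega))
        (fun i hi => hchain i (by omega))
      have hll : (seq n).length = l + 1 := hlen n (by omega)
      set c : X := (seq n)[l]'(by omega) with hc
      refine ⟨w ++ [c], by simp [hwlen]; ring, ?_⟩
      intro i hi
      by_cases hin : i < n
      · rw [List.drop_append_of_le_length (by omega),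
          List.take_append_of_le_length (by rw [List.length_drop]; omega),
          hwin i hin]
      · have hieq : i = n := by omega
        subst hieq
        have hdw : w.drop i = (seq i).take l := by
          have h1 : w.drop i = ((w.drop (i-1)).take (l+1)).drop 1 := by
            rw [List.drop_take, List.drop_drop]
            rw [List.take_of_length_le (by rw [List.length_drop]; omega)]
            congr 1
            omega
          rw [h1, hwin (i-1) (by omega), hchain (i-1) (by omega),
            show i - 1 + 1 = i from by omega]
        rw [List.drop_append_of_le_length (by omega), hdw]
        have key : (seq i).take l ++ [c] = seq i := by
          have h3 := (List.take_of_length_le (le_of_eq hll)).symm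
          conv_rhs => rw [h3, List.take_succ]
          congr 1
          rw [List.getElem?_eq_getElem (by omega)]
          rfl
        rw [key]
        exact List.take_of_length_le (le_of_eq hll)

lemma windows_mem {X : Type*} (F : Set (List X)) {l n : ℕ} {w : List X}
    (hwl : w.length = n + l) (hleg : ListLegal F w) :
    (∀ i : Fin n, ((w.drop (i:ℕ)).take (l+1)).length = l + 1 ∧
        ListLegal F ((w.drop (i:ℕ)).take (l+1))) ∧
    ∀ (i : Fin n) (h : (i : ℕ) + 1 < n),
      ((w.drop (i:ℕ)).take (l+1)).drop 1 = ((w.drop ((i:ℕ)+1)).take (l+1)).take l := by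
  constructor
  · intro i
    have hi := i.isLt
    constructor
    · rw [List.length_take, List.length_drop]; omega
    · exact hleg.infix ((List.take_prefix _ _).isInfix.trans (List.drop_suffix _ _).isInfix)
  · intro i h
    rw [List.drop_take, List.drop_drop, List.take_take]
    first
    | rfl
    | (congr 1 <;> first | omega | (congr 1 <;> omega))

lemma card_words_eq_card_paths {X : Type*} (F : Set (List X)) {l n : ℕ} (hn : 1 ≤ n)
    (hFle : ∀ f ∈ F, f.length ≤ l + 1) :
    Nat.card {w : List X // w.length = n + l ∧ ListLegal F w} =
    Nat.card {seq : Fin n → List X //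
      (∀ i, (seq i).length = l + 1 ∧ ListLegal F (seq i)) ∧
      ∀ (i : Fin n) (h : (i : ℕ) + 1 < n),
        (seq i).drop 1 = (seq ⟨(i : ℕ) + 1, h⟩).take l} := by
  apply Nat.card_eq_of_bijective
    (fun w => ⟨fun i => ((w : List X).drop (i:ℕ)).take (l+1),
      (windows_mem F w.2.1 w.2.2).1, fun i h => (windows_mem F w.2.1 w.2.2).2 i h⟩)
  constructor
  · rintro ⟨w, hw⟩ ⟨w', hw'⟩ heq
    exact Subtype.ext (eq_of_windows hn hw.1 hw'.1
      (fun i hi => congrFun (Subtype.ext_iff.1 heq) ⟨i, hi⟩))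
  · rintro ⟨seq, hprops, hchain⟩
    set seqN : ℕ → List X := fun i => if h : i < n then seq ⟨i, h⟩ else [] with hseqN
    obtain ⟨w, hwl, hwin⟩ := exists_word seqN n hn
      (fun i hi => by simp only [hseqN, dif_pos hi]; exact (hprops ⟨i, hi⟩).1)
      (fun i hi => by
        have h1 : i < n := by omega
        simp only [hseqN, dif_pos h1, dif_pos hi]
        exact hchain ⟨i, h1⟩ hi)
    have hleg : ListLegal F w := legal_of_windows hn hwl hFle
      (fun i hi => by
        rw [hwin i hi]
        simp only [hseqN, dif_pos hi]
        exact (hprops ⟨i, hi⟩).2)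
    refine ⟨⟨w, hwl, hleg⟩, ?_⟩
    apply Subtype.ext
    funext i
    show (w.drop (i:ℕ)).take (l+1) = seq i
    rw [hwin (i:ℕ) i.isLt]
    simp only [hseqN, dif_pos i.isLt]

lemma limsup_root_shift (a : ℕ → ℝ) (l : ℕ) (B : ℝ) (hB : 1 ≤ B)
    (h0 : ∀ m, 0 ≤ a m) (hA : ∀ m, a m ≤ B ^ m) :
    Filter.limsup (fun m : ℕ => a m ^ (1 / (m : ℝ))) Filter.atTop
      = Filter.limsup (fun n : ℕ => a (n + l) ^ (1 / (n : ℝ))) Filter.atTop := by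
  have hB0 : (0:ℝ) < B := by linarith
  set u : ℕ → ℝ := fun n => a (n + l) ^ (1 / ((n : ℝ) + l)) with hu
  set t : ℕ → ℝ := fun n => a (n + l) ^ (1 / (n : ℝ)) with ht
  -- step A : LHS = limsup u
  have stepA : Filter.limsup (fun m : ℕ => a m ^ (1 / (m : ℝ))) Filter.atTop
      = Filter.limsup u Filter.atTop := by
    rw [← limsup_nat_add (fun m : ℕ => a m ^ (1 / (m : ℝ))) l]
    apply limsup_congr
    filter_upwards with n
    push_cast
    rfl
  rw [stepA]
  -- basic bounds
  have hroot : ∀ (c : ℝ) (m : ℕ), 0 < c → (c ^ m) ^ (1 / (m : ℝ)) ≤ max c 1 := by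
    intro c m hc
    rcases Nat.eq_zero_or_pos m with hm | hm
    · subst hm; simp
    · have hm' : (m : ℝ) ≠ 0 := by positivity
      rw [← Real.rpow_natCast c m, ← Real.rpow_mul hc.le, mul_one_div, div_self hm',
        Real.rpow_one]
      exact le_max_left _ _
  have hu0 : ∀ n, 0 ≤ u n := fun n => Real.rpow_nonneg (h0 _) _
  have ht0 : ∀ n, 0 ≤ t n := fun n => Real.rpow_nonneg (h0 _) _
  have huB : ∀ n, u n ≤ B := by
    intro n
    have h1 : u n ≤ (B ^ (n + l)) ^ (1 / ((n : ℝ) + l)) := by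
      apply Real.rpow_le_rpow (h0 _) (hA _) (by positivity)
    rcases Nat.eq_zero_or_pos (n + l) with hm | hm
    · simp only [hu, hm]
      rw [show ((n : ℝ) + l) = ((n + l : ℕ) : ℝ) by push_cast; ring, hm]
      norm_num
      exact hB
    · refine h1.trans ?_
      rw [show ((n : ℝ) + l) = ((n + l : ℕ) : ℝ) by push_cast; ring]
      calc (B ^ (n + l)) ^ (1 / ((n + l : ℕ) : ℝ)) ≤ max B 1 := hroot B (n+l) hB0
        _ = B := max_eq_left hB
  have htB : ∀ n, 1 ≤ n → t n ≤ B ^ (l + 1) := by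
    intro n hn
    have hn' : (0:ℝ) < n := by exact_mod_cast hn
    have h1 : t n ≤ (B ^ (n + l)) ^ (1 / (n : ℝ)) :=
      Real.rpow_le_rpow (h0 _) (hA _) (by positivity)
    refine h1.trans ?_
    rw [← Real.rpow_natCast B (n + l), ← Real.rpow_mul hB0.le, ← Real.rpow_natCast B (l + 1)]
    apply Real.rpow_le_rpow_of_exponent_le hB
    rw [mul_one_div, div_le_iff₀ hn']
    push_cast
    have hl0 : (0:ℝ) ≤ l := Nat.cast_nonneg l
    have hn1 : (1:ℝ) ≤ n := by exact_mod_cast hn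
    nlinarith [mul_nonneg (by linarith : (0:ℝ) ≤ (n:ℝ) - 1) hl0]
  -- boundedness facts
  have hbu : IsBoundedUnder (· ≤ ·) atTop u := isBoundedUnder_of ⟨B, huB⟩
  have hbu' : IsBoundedUnder (· ≥ ·) atTop u := isBoundedUnder_of ⟨0, hu0⟩
  have hcu : IsCoboundedUnder (· ≤ ·) atTop u := hbu'.isCoboundedUnder_flip
  have hbt : IsBoundedUnder (· ≤ ·) atTop t := by
    apply isBoundedUnder_of_eventually_le (a := B ^ (l + 1))
    filter_upwards [eventually_ge_atTop 1] with n hn using htB n hn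
  have hbt' : IsBoundedUnder (· ≥ ·) atTop t := isBoundedUnder_of ⟨0, ht0⟩
  have hct : IsCoboundedUnder (· ≤ ·) atTop t := hbt'.isCoboundedUnder_flip
  -- key multiplicative splitting : for n ≥ 1 and a (n+l) > 0,
  -- t n = u n * u n ^ (l / n)
  have hsplit : ∀ n : ℕ, 1 ≤ n → 0 < a (n + l) → t n = u n * u n ^ ((l : ℝ) / n) := by
    intro n hn ha
    have hn' : (0:ℝ) < n := by exact_mod_cast hn
    have hnl : (0:ℝ) < (n : ℝ) + l := by positivity
    have e1 : u n ^ ((l : ℝ) / n) = a (n + l) ^ ((1 / ((n : ℝ) + l)) * ((l : ℝ) / n)) := by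
      rw [hu, ← Real.rpow_mul (h0 _)]
    have hexp : 1 / ((n:ℝ) + l) + 1 / ((n:ℝ) + l) * ((l:ℝ) / (n:ℝ)) = 1 / (n:ℝ) := by
      field_simp
    rw [e1, hu, ht, ← Real.rpow_add ha, hexp]
  -- direction 1 : limsup t ≤ limsup u
  have dir1 : Filter.limsup t Filter.atTop ≤ Filter.limsup u Filter.atTop := by
    have key1 : ∀ ε : ℝ, 0 < ε →
        Filter.limsup t Filter.atTop ≤ (1 + ε) * Filter.limsup u Filter.atTop := by
      intro ε hε
      have htend : Tendsto (fun n : ℕ => B ^ ((l : ℝ) / n)) atTop (𝓝 1) := by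
        have h1 : Tendsto (fun n : ℕ => (l : ℝ) / n) atTop (𝓝 0) :=
          tendsto_const_div_atTop_nhds_zero_nat (l : ℝ)
        have h2 := (Real.continuousAt_const_rpow (ne_of_gt hB0)).tendsto.comp h1
        simpa [Function.comp_def] using h2
      have hev : ∀ᶠ n in atTop, t n ≤ (1 + ε) * u n := by
        filter_upwards [eventually_ge_atTop 1,
          htend.eventually_le_const (by linarith : (1:ℝ) < 1 + ε)] with n hn hBe
        rcases (h0 (n + l)).eq_or_lt with ha | ha
        · have hn' : (1 : ℝ) / n ≠ 0 := by
            simp only [ne_eq, one_div, inv_eq_zero, Nat.cast_eq_zero]; omega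
          have : t n = 0 := by
            show a (n + l) ^ (1 / (n : ℝ)) = 0
            rw [← ha, Real.zero_rpow hn']
          rw [this]
          exact mul_nonneg (by linarith) (hu0 n)
        · rw [hsplit n hn ha, mul_comm]
          apply mul_le_mul_of_nonneg_right _ (hu0 n)
          calc u n ^ ((l : ℝ) / n) ≤ B ^ ((l : ℝ) / n) :=
                Real.rpow_le_rpow (hu0 n) (huB n) (by positivity)
            _ ≤ 1 + ε := hBe
      calc Filter.limsup t Filter.atTop ≤ Filter.limsup (fun n => (1 + ε) * u n) Filter.atTop :=
            limsup_le_limsup hev hct (by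
              apply isBoundedUnder_of_eventually_le (a := (1 + ε) * B)
              filter_upwards with n
              exact mul_le_mul_of_nonneg_left (huB n) (by linarith))
        _ = (1 + ε) * Filter.limsup u Filter.atTop := by
            have hmono : Monotone (fun x : ℝ => (1 + ε) * x) := fun x y hxy =>
              mul_le_mul_of_nonneg_left hxy (by linarith)
            exact (hmono.map_limsup_of_continuousAt u
              ((continuous_const.mul continuous_id).continuousAt) hbu hcu).symm
    have htendto : Tendsto (fun ε : ℝ => (1 + ε) * Filter.limsup u Filter.atTop)
        (𝓝[>] (0:ℝ)) (𝓝 (Filter.limsup u Filter.atTop)) := by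
      have hc : ContinuousAt (fun ε : ℝ => (1 + ε) * Filter.limsup u Filter.atTop) (0:ℝ) :=
        ((continuous_const.add continuous_id).mul continuous_const).continuousAt
      have := hc.tendsto
      simp only [id_eq, add_zero, one_mul] at this
      exact this.mono_left nhdsWithin_le_nhds
    refine ge_of_tendsto htendto ?_
    filter_upwards [self_mem_nhdsWithin] with ε hε
    exact key1 ε hε
  -- direction 2 : limsup u ≤ limsup t
  have dir2 : Filter.limsup u Filter.atTop ≤ Filter.limsup t Filter.atTop := by
    have key2 : ∀ ε : ℝ, ε ∈ Set.Ioo (0:ℝ) 1 →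
        Filter.limsup u Filter.atTop ≤ (1 - ε)⁻¹ * Filter.limsup t Filter.atTop + ε := by
      rintro ε ⟨hε0, hε1⟩
      have hinv : (0:ℝ) < (1 - ε)⁻¹ := by
        apply inv_pos.2; linarith
      have htend : Tendsto (fun n : ℕ => ε ^ ((l : ℝ) / n)) atTop (𝓝 1) := by
        have h1 : Tendsto (fun n : ℕ => (l : ℝ) / n) atTop (𝓝 0) :=
          tendsto_const_div_atTop_nhds_zero_nat (l : ℝ)
        have h2 := (Real.continuousAt_const_rpow (ne_of_gt hε0)).tendsto.comp h1
        simpa [Function.comp_def] using h2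
      have hev : ∀ᶠ n in atTop, u n ≤ (1 - ε)⁻¹ * t n + ε := by
        filter_upwards [eventually_ge_atTop 1,
          htend.eventually_const_lt (by linarith : (1:ℝ) - ε < 1)] with n hn hεe
        rcases le_or_gt (u n) ε with hc | hc
        · have : (0:ℝ) ≤ (1 - ε)⁻¹ * t n := mul_nonneg hinv.le (ht0 n)
          linarith
        · have ha : 0 < a (n + l) := by
            rcases (h0 (n + l)).eq_or_lt with ha | ha
            · exfalso
              have hnn : (0:ℝ) < (n:ℝ) := by exact_mod_cast hn
              have : u n = 0 := by
                show a (n + l) ^ (1 / ((n : ℝ) + l)) = 0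
                rw [← ha, Real.zero_rpow (by positivity)]
              linarith
            · exact ha
          have hstep : u n * (1 - ε) ≤ t n := by
            rw [hsplit n hn ha]
            apply mul_le_mul_of_nonneg_left _ (hu0 n)
            calc (1:ℝ) - ε ≤ ε ^ ((l : ℝ) / n) := hεe.le
              _ ≤ u n ^ ((l : ℝ) / n) :=
                  Real.rpow_le_rpow hε0.le hc.le (by positivity)
          have h1e : (0:ℝ) < 1 - ε := by linarith
          have : u n ≤ (1 - ε)⁻¹ * t n := by
            rw [inv_mul_eq_div, le_div_iff₀ h1e]
            exact hstep
          linarith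
      calc Filter.limsup u Filter.atTop
          ≤ Filter.limsup (fun n => (1 - ε)⁻¹ * t n + ε) Filter.atTop :=
            limsup_le_limsup hev hcu (by
              apply isBoundedUnder_of_eventually_le (a := (1 - ε)⁻¹ * (B ^ (l+1)) + ε)
              filter_upwards [eventually_ge_atTop 1] with n hn
              exact add_le_add_left
                (mul_le_mul_of_nonneg_left (htB n hn) hinv.le) ε)
        _ = (1 - ε)⁻¹ * Filter.limsup t Filter.atTop + ε := by
            have hmono : Monotone (fun x : ℝ => (1 - ε)⁻¹ * x + ε) := fun x y hxy => by
              dsimp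
              have := mul_le_mul_of_nonneg_left hxy hinv.le
              linarith
            exact (hmono.map_limsup_of_continuousAt t
              (((continuous_const.mul continuous_id).add continuous_const).continuousAt)
              hbt hct).symm
    have htendto : Tendsto (fun ε : ℝ => (1 - ε)⁻¹ * Filter.limsup t Filter.atTop + ε)
        (𝓝[>] (0:ℝ)) (𝓝 (Filter.limsup t Filter.atTop)) := by
      have hc : ContinuousAt (fun ε : ℝ => (1 - ε)⁻¹ * Filter.limsup t Filter.atTop + ε)
          (0:ℝ) := by
        apply ContinuousAt.add _ continuousAt_id
        apply ContinuousAt.mul _ continuousAt_const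
        exact (continuous_const.sub continuous_id).continuousAt.inv₀ (by norm_num)
      have := hc.tendsto
      simp only [sub_zero, inv_one, one_mul, add_zero] at this
      exact this.mono_left nhdsWithin_le_nhds
    refine ge_of_tendsto htendto ?_
    filter_upwards [Ioo_mem_nhdsGT_of_mem (by norm_num : (0:ℝ) ∈ Set.Ico (0:ℝ) 1)] with ε hε
    exact key2 ε hε
  exact le_antisymm dir2 dir1

/-- Let `F` be a finite nonempty set of forbidden words, each of length at least `2`, with
`l + 1` the maximal length of a word of `F`.  Then
`limsup |L_m| ^ (1/m) = limsup (p_n) ^ (1/n)`, where `L_m` is the set of legal words of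
length `m` and `p_n` is the number of paths of length `n` in the Ufnarovski graph: sequences
of `n` legal words of length `l + 1` in which the length-`l` suffix of each term equals the
length-`l` prefix of the next.  That is, the algebraic entropy of the monomial algebra equals
the algebraic entropy of the path algebra of its Ufnarovski graph. -/
theorem limsup_root_card_legal_eq_limsup_root_card_paths
    (X : Type*) [Fintype X] (F : Finset (List X)) (l : ℕ)
    (hF2 : ∀ f ∈ F, 2 ≤ f.length) (hFle : ∀ f ∈ F, f.length ≤ l + 1)
    (hFmax : ∃ f ∈ F, f.length = l + 1) :
    Filter.limsup
      (fun m : ℕ =>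
        (Nat.card {w : List X // w.length = m ∧ ListLegal (↑F) w} : ℝ) ^ (1 / (m : ℝ)))
      Filter.atTop =
    Filter.limsup
      (fun n : ℕ =>
        (Nat.card {seq : Fin n → List X //
          (∀ i, (seq i).length = l + 1 ∧ ListLegal (↑F) (seq i)) ∧
          ∀ (i : Fin n) (h : (i : ℕ) + 1 < n),
            (seq i).drop 1 = (seq ⟨(i : ℕ) + 1, h⟩).take l} : ℝ) ^ (1 / (n : ℝ)))
      Filter.atTop := by
  classical
  have hFle' : ∀ f ∈ (↑F : Set (List X)), f.length ≤ l + 1 := fun f hf => hFle f hf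
  set a : ℕ → ℝ :=
    fun m => (Nat.card {w : List X // w.length = m ∧ ListLegal (↑F) w} : ℝ) with ha
  have hinj : ∀ m : ℕ, Function.Injective
      (fun (w : {w : List X // w.length = m ∧ ListLegal (↑F : Set (List X)) w}) (i : Fin m) =>
        (w : List X)[(i : ℕ)]'(by rw [w.2.1]; exact i.isLt)) := by
    intro m w w' h
    apply Subtype.ext
    apply List.ext_getElem (by rw [w.2.1, w'.2.1])
    intro j h1 h2
    have := congrFun h ⟨j, by rw [← w.2.1]; exact h1⟩
    simpa using this
  have hbound : ∀ m, a m ≤ ((Fintype.card X : ℝ) + 1) ^ m := by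
    intro m
    have fin : Finite {w : List X // w.length = m ∧ ListLegal (↑F : Set (List X)) w} :=
      Finite.of_injective _ (hinj m)
    have h1 : Nat.card {w : List X // w.length = m ∧ ListLegal (↑F : Set (List X)) w}
        ≤ Nat.card (Fin m → X) := Nat.card_le_card_of_injective _ (hinj m)
    have h2 : Nat.card (Fin m → X) = Fintype.card X ^ m := by
      rw [Nat.card_fun, Nat.card_eq_fintype_card, Nat.card_eq_fintype_card, Fintype.card_fin]
    calc a m ≤ ((Fintype.card X ^ m : ℕ) : ℝ) := by
          simp only [ha]
          exact_mod_cast h2 ▸ h1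
      _ = ((Fintype.card X : ℝ)) ^ m := by push_cast; ring
      _ ≤ ((Fintype.card X : ℝ) + 1) ^ m := by
          apply pow_le_pow_left₀ (by positivity) (by linarith) m
  have hB1 : (1:ℝ) ≤ (Fintype.card X : ℝ) + 1 := by
    have : (0:ℝ) ≤ (Fintype.card X : ℝ) := Nat.cast_nonneg _
    linarith
  rw [limsup_root_shift a l ((Fintype.card X : ℝ) + 1) hB1
    (fun m => Nat.cast_nonneg _) hbound]
  apply limsup_congr
  filter_upwards [eventually_ge_atTop 1] with n hn
  have := card_words_eq_card_paths (↑F : Set (List X)) hn hFle' (n := n)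
  rw [ha]
  simp only
  rw [this]
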